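/- Let A: X → Y be a continuous linear mapping between locally convex topological vector spaces and let Ω ⊆ X be a convex set. Then: (a) A(iri(Ω)) ⊆ iri(A(Ω)) and A(qri(Ω)) ⊆ qri(A(Ω)); (b) if iri(Ω) ≠ ∅, then A(iri(Ω)) = iri(A(Ω)); (c) if qri(Ω) ≠ ∅ and the set A(Ω) is quasi-regular, then A(qri(Ω)) = qri(A(Ω)). -/

import Mathlib

open Set Pointwise Filter Topology

/-- The cone generated by a set `A`: `{t • a | t ≥ 0, a ∈ A}`. -/
def coneGen {X : Type*} [AddCommGroup X] [Module ℝ X] (A : Set X) : Set X :=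
  {y | ∃ t : ℝ, 0 ≤ t ∧ ∃ a ∈ A, y = t • a}

/-- A set is a linear subspace if it is the carrier of a submodule. -/
def IsLinSubspace {X : Type*} [AddCommGroup X] [Module ℝ X] (s : Set X) : Prop :=
  ∃ L : Submodule ℝ X, (L : Set X) = s

/-- Intrinsic relative interior. -/
def iri {X : Type*} [AddCommGroup X] [Module ℝ X] (Ω : Set X) : Set X :=
  {x ∈ Ω | IsLinSubspace (coneGen ((fun y => y - x) '' Ω))}

/-- Quasi-relative interior. -/
def qri {X : Type*} [AddCommGroup X] [Module ℝ X] [TopologicalSpace X] (Ω : Set X) : Set X :=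
  {x ∈ Ω | IsLinSubspace (closure (coneGen ((fun y => y - x) '' Ω)))}

/-- Relative interior in a topological vector space. -/
def ri {X : Type*} [AddCommGroup X] [Module ℝ X] [TopologicalSpace X] (Ω : Set X) : Set X :=
  {x ∈ Ω | ∃ V ∈ nhds x, V ∩ closure ((affineSpan ℝ Ω : Set X)) ⊆ Ω}

/-- Normal cone (functional-analytic version), a subset of the topological dual. -/
def normalCone {X : Type*} [AddCommGroup X] [Module ℝ X] [TopologicalSpace X]
    (Ω : Set X) (xb : X) : Set (X →L[ℝ] ℝ) :=
  {f | ∀ x ∈ Ω, f (x - xb) ≤ 0}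

/-- A convex set is quasi-regular if its quasi-relative interior coincides with
its intrinsic relative interior. -/
def QuasiRegular {X : Type*} [AddCommGroup X] [Module ℝ X] [TopologicalSpace X]
    (Ω : Set X) : Prop :=
  qri Ω = iri Ω

section Aux

variable {X Y : Type*} [AddCommGroup X] [Module ℝ X] [AddCommGroup Y] [Module ℝ Y]

lemma mem_coneGen_of_mem {A : Set X} {a : X} (ha : a ∈ A) : a ∈ coneGen A :=
  ⟨1, zero_le_one, a, ha, (one_smul ℝ a).symm⟩

lemma coneGen_sub_mono {Ω : Set X} (hconv : Convex ℝ Ω) {x0 z : X}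
    (hx0 : x0 ∈ Ω) (hz : z ∈ Ω) {l : ℝ} (hl : 0 < l) (hl1 : l ≤ 1) :
    coneGen ((fun y => y - x0) '' Ω) ⊆
      coneGen ((fun y => y - (l • x0 + (1 - l) • z)) '' Ω) := by
  rintro v ⟨t, ht, a, ⟨ω, hω, rfl⟩, rfl⟩
  have hmem : l • ω + (1 - l) • z ∈ Ω := hconv hω hz hl.le (by linarith) (by ring)
  refine ⟨t / l, div_nonneg ht hl.le,
    l • ω + (1 - l) • z - (l • x0 + (1 - l) • z), ⟨_, hmem, rfl⟩, ?_⟩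
  have h1 : l • ω + (1 - l) • z - (l • x0 + (1 - l) • z) = l • (ω - x0) := by module
  rw [h1, smul_smul, div_mul_cancel₀ t hl.ne']

lemma coneGen_subset_submodule {Ω : Set X} {x0 z : X} (hz : z ∈ Ω) {l : ℝ}
    {L : Submodule ℝ X} (hsub : (fun y => y - x0) '' Ω ⊆ (L : Set X)) :
    coneGen ((fun y => y - (l • x0 + (1 - l) • z)) '' Ω) ⊆ (L : Set X) := by
  rintro v ⟨t, ht, a, ⟨ω, hω, rfl⟩, rfl⟩
  dsimp only
  have h1 : ω - x0 ∈ L := hsub ⟨ω, hω, rfl⟩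
  have h2 : z - x0 ∈ L := hsub ⟨z, hz, rfl⟩
  have h3 : ω - (l • x0 + (1 - l) • z) = (ω - x0) - (1 - l) • (z - x0) := by module
  rw [h3]
  exact L.smul_mem t (L.sub_mem h1 (L.smul_mem _ h2))

lemma iri_seg {Ω : Set X} (hconv : Convex ℝ Ω) {x0 z : X}
    (hx0 : x0 ∈ iri Ω) (hz : z ∈ Ω) {l : ℝ} (hl : 0 < l) (hl1 : l ≤ 1) :
    l • x0 + (1 - l) • z ∈ iri Ω := by
  obtain ⟨hx0Ω, L, hL⟩ := hx0
  refine ⟨hconv hx0Ω hz hl.le (by linarith) (by ring), L, ?_⟩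
  apply subset_antisymm
  · rw [hL]
    exact coneGen_sub_mono hconv hx0Ω hz hl hl1
  · apply coneGen_subset_submodule hz
    intro v hv
    rw [hL]
    exact mem_coneGen_of_mem hv

lemma qri_seg [TopologicalSpace X] {Ω : Set X} (hconv : Convex ℝ Ω) {x0 z : X}
    (hx0 : x0 ∈ qri Ω) (hz : z ∈ Ω) {l : ℝ} (hl : 0 < l) (hl1 : l ≤ 1) :
    l • x0 + (1 - l) • z ∈ qri Ω := by
  obtain ⟨hx0Ω, L, hL⟩ := hx0
  refine ⟨hconv hx0Ω hz hl.le (by linarith) (by ring), L, ?_⟩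
  have hcl : IsClosed (L : Set X) := by rw [hL]; exact isClosed_closure
  apply subset_antisymm
  · rw [hL]
    exact closure_mono (coneGen_sub_mono hconv hx0Ω hz hl hl1)
  · apply closure_minimal _ hcl
    apply coneGen_subset_submodule hz
    intro v hv
    rw [hL]
    exact subset_closure (mem_coneGen_of_mem hv)

lemma image_sub_image {F : Type*} [FunLike F X Y] [LinearMapClass F ℝ X Y]
    (A : F) (Ω : Set X) (x : X) :
    (fun y => y - A x) '' (A '' Ω) = A '' ((fun y => y - x) '' Ω) := by
  rw [image_image, image_image]
  simp [map_sub]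

lemma coneGen_image {F : Type*} [FunLike F X Y] [LinearMapClass F ℝ X Y]
    (A : F) (S : Set X) :
    coneGen (A '' S) = A '' coneGen S := by
  ext y
  constructor
  · rintro ⟨t, ht, b, ⟨a, ha, rfl⟩, rfl⟩
    exact ⟨t • a, ⟨t, ht, a, ha, rfl⟩, map_smul A t a⟩
  · rintro ⟨b, ⟨t, ht, a, ha, rfl⟩, rfl⟩
    exact ⟨t, ht, A a, ⟨a, ha, rfl⟩, map_smul A t a⟩

end Aux

section Aux2

variable {X Y : Type*} [AddCommGroup X] [Module ℝ X]
  [TopologicalSpace X] [IsTopologicalAddGroup X] [ContinuousSMul ℝ X]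
  [AddCommGroup Y] [Module ℝ Y]
  [TopologicalSpace Y] [IsTopologicalAddGroup Y] [ContinuousSMul ℝ Y]

lemma closure_image_closure' (A : X →L[ℝ] Y) (S : Set X) :
    closure (A '' closure S) = closure (A '' S) :=
  subset_antisymm
    (closure_minimal (image_closure_subset_closure_image A.continuous) isClosed_closure)
    (closure_mono (image_mono subset_closure))

lemma exists_rep (A : X →L[ℝ] Y) {Ω : Set X} {x0 : X} (hx0 : x0 ∈ Ω) {yb : Y}
    (hy : yb ∈ iri (A '' Ω)) :
    ∃ l : ℝ, 0 < l ∧ l ≤ 1 ∧ ∃ z ∈ Ω, A (l • x0 + (1 - l) • z) = yb := by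
  obtain ⟨hyb, L', hL'⟩ := hy
  have h1 : A x0 - yb ∈ L' := by
    show A x0 - yb ∈ (L' : Set Y)
    rw [hL']
    exact mem_coneGen_of_mem ⟨A x0, ⟨x0, hx0, rfl⟩, rfl⟩
  have h2 : yb - A x0 ∈ (L' : Set Y) := by
    have := L'.neg_mem h1
    rwa [neg_sub] at this
  rw [hL'] at h2
  obtain ⟨t, ht, b, ⟨w, ⟨z, hz, rfl⟩, rfl⟩, heq⟩ := h2
  have h1t : (0:ℝ) < 1 + t := by linarith
  have hne : (1 + t) ≠ 0 := h1t.ne'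
  have key : (1 + t) • yb = A x0 + t • A z := by
    linear_combination (norm := module) heq
  refine ⟨(1 + t)⁻¹, inv_pos.2 h1t, ?_, z, hz, ?_⟩
  · rw [inv_le_one₀ h1t]
    linarith
  · have h3 : (1 - (1 + t)⁻¹) = (1 + t)⁻¹ * t := by field_simp; ring
    rw [map_add, map_smul, map_smul]
    calc (1 + t)⁻¹ • A x0 + (1 - (1 + t)⁻¹) • A z
        = (1 + t)⁻¹ • (A x0 + t • A z) := by rw [smul_add, smul_smul, h3]
      _ = (1 + t)⁻¹ • ((1 + t) • yb) := by rw [key]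
      _ = yb := by rw [smul_smul, inv_mul_cancel₀ hne, one_smul]

end Aux2

/-- behavior of intrinsic relative and quasi-relative interiors
under continuous linear images. -/
theorem image_iri_qri {X Y : Type*} [AddCommGroup X] [Module ℝ X]
    [TopologicalSpace X] [IsTopologicalAddGroup X] [ContinuousSMul ℝ X]
    [LocallyConvexSpace ℝ X]
    [AddCommGroup Y] [Module ℝ Y]
    [TopologicalSpace Y] [IsTopologicalAddGroup Y] [ContinuousSMul ℝ Y]
    [LocallyConvexSpace ℝ Y]
    (A : X →L[ℝ] Y) (Ω : Set X) (hconv : Convex ℝ Ω) :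
    (A '' iri Ω ⊆ iri (A '' Ω) ∧ A '' qri Ω ⊆ qri (A '' Ω)) ∧
    ((iri Ω).Nonempty → A '' iri Ω = iri (A '' Ω)) ∧
    ((qri Ω).Nonempty → QuasiRegular (A '' Ω) → A '' qri Ω = qri (A '' Ω)) := by
  have ha1 : A '' iri Ω ⊆ iri (A '' Ω) := by
    rintro _ ⟨x, ⟨hxΩ, L, hL⟩, rfl⟩
    refine ⟨⟨x, hxΩ, rfl⟩, L.map A.toLinearMap, ?_⟩
    rw [Submodule.map_coe, ContinuousLinearMap.coe_coe, hL,
      image_sub_image A, coneGen_image A]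
  have ha2 : A '' qri Ω ⊆ qri (A '' Ω) := by
    rintro _ ⟨x, ⟨hxΩ, L, hL⟩, rfl⟩
    refine ⟨⟨x, hxΩ, rfl⟩, (L.map A.toLinearMap).topologicalClosure, ?_⟩
    rw [Submodule.topologicalClosure_coe, Submodule.map_coe,
      ContinuousLinearMap.coe_coe, hL, image_sub_image A, coneGen_image A]
    exact closure_image_closure' A _
  refine ⟨⟨ha1, ha2⟩, ?_, ?_⟩
  · rintro ⟨x0, hx0⟩
    refine subset_antisymm ha1 ?_
    intro yb hy
    obtain ⟨l, hl, hl1, z, hz, hAx⟩ := exists_rep A hx0.1 hy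
    exact ⟨l • x0 + (1 - l) • z, iri_seg hconv hx0 hz hl hl1, hAx⟩
  · rintro ⟨x0, hx0⟩ hreg
    refine subset_antisymm ha2 ?_
    intro yb hy
    have hy' : yb ∈ iri (A '' Ω) := by rwa [hreg] at hy
    obtain ⟨l, hl, hl1, z, hz, hAx⟩ := exists_rep A hx0.1 hy'
    exact ⟨l • x0 + (1 - l) • z, qri_seg hconv hx0 hz hl hl1, hAx⟩
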